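/- Let F be an unsatisfiable hitting clause-set with a variable v ∈ var(F) such that vdeg_F(v) ≤ 3. Then v is a singular variable of F, and F contains an fs-pair as a subset. -/

import Mathlib

/-- A clause-set: a finite set of finite sets of integers. -/
abbrev Cls := Finset (Finset ℤ)

/-- A clause: a finite set of nonzero integers, clash-free. -/
def IsClause (C : Finset ℤ) : Prop := (0 : ℤ) ∉ C ∧ ∀ x ∈ C, -x ∉ C

/-- All members are clauses. -/
def IsClauseSet (F : Cls) : Prop := ∀ C ∈ F, IsClause C

/-- Satisfiability: some clause (partial assignment) meets every clause of `F`. -/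
def Sat (F : Cls) : Prop := ∃ S : Finset ℤ, IsClause S ∧ ∀ D ∈ F, (S ∩ D).Nonempty

/-- Hitting: any two distinct clauses clash. -/
def Hitting (F : Cls) : Prop := ∀ C ∈ F, ∀ D ∈ F, C ≠ D → ∃ x ∈ C, -x ∈ D

/-- Unsatisfiable hitting clause-set. -/
def UHit (F : Cls) : Prop := IsClauseSet F ∧ Hitting F ∧ ¬ Sat F

/-- The variables of a clause-set (as absolute values of its literals). -/
def cvar (F : Cls) : Finset ℤ := F.sup (fun C => C.image (fun x => |x|))

/-- Number of variables. -/
def nvar (F : Cls) : ℕ := (cvar F).card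

/-- Deficiency: number of clauses minus number of variables. -/
def deficiency (F : Cls) : ℤ := (F.card : ℤ) - (nvar F : ℤ)

/-- Literal degree. -/
def ldeg (F : Cls) (x : ℤ) : ℕ := (F.filter (fun C => x ∈ C)).card

/-- Variable degree. -/
def vdeg (F : Cls) (v : ℤ) : ℕ := ldeg F v + ldeg F (-v)

/-- Singular variable. -/
def SingularVar (F : Cls) (v : ℤ) : Prop :=
  v ∈ cvar F ∧ min (ldeg F v) (ldeg F (-v)) = 1

/-- Nonsingular clause-set. -/
def Nonsingular (F : Cls) : Prop := ∀ v, ¬ SingularVar F v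

/-- Number of singular variables. -/
def nsv (F : Cls) : ℕ :=
  ((cvar F).filter (fun v => min (ldeg F v) (ldeg F (-v)) = 1)).card

/-- Number of 1-singular variables. -/
def nosv (F : Cls) : ℕ :=
  ((cvar F).filter (fun v => min (ldeg F v) (ldeg F (-v)) = 1 ∧ vdeg F v = 2)).card

/-- Number of singular, non-1-singular variables. -/
def nnosv (F : Cls) : ℕ :=
  ((cvar F).filter (fun v => min (ldeg F v) (ldeg F (-v)) = 1 ∧ vdeg F v ≠ 2)).card

/-- Full subsumption pair: `{E ∪ {x}, E ∪ {-x}}`. -/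
def IsFsPair (P : Cls) : Prop :=
  ∃ (E : Finset ℤ) (x : ℤ), IsClause E ∧ x ≠ 0 ∧ x ∉ E ∧ -x ∉ E ∧
    P = {insert x E, insert (-x) E}

/-- Strict fs-resolvability: an fs-pair whose resolvent is not in `F`, and whose
resolution variable occurs in the rest of `F`. -/
def StrictlyFsResolvable (F : Cls) : Prop :=
  ∃ (E : Finset ℤ) (x : ℤ), IsClause E ∧ x ≠ 0 ∧ x ∉ E ∧ -x ∉ E ∧
    insert x E ∈ F ∧ insert (-x) E ∈ F ∧ E ∉ F ∧
    |x| ∈ cvar (F \ {insert x E, insert (-x) E})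

/-- `F'` is an nfs-flip of `F`: an nfs-pair `{E ∪ {x}, E ∪ {-x,y}} ⊆ F` is replaced
by its flipped pair `{E ∪ {x,-y}, E ∪ {y}}`, which must not intersect `F`. -/
def NfsFlip (F F' : Cls) : Prop :=
  ∃ (E : Finset ℤ) (x y : ℤ), IsClause E ∧ x ≠ 0 ∧ y ≠ 0 ∧ |x| ≠ |y| ∧
    x ∉ E ∧ -x ∉ E ∧ y ∉ E ∧ -y ∉ E ∧
    insert x E ∈ F ∧ insert y (insert (-x) E) ∈ F ∧
    insert (-y) (insert x E) ∉ F ∧ insert y E ∉ F ∧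
    F' = (F \ {insert x E, insert y (insert (-x) E)}) ∪
         {insert (-y) (insert x E), insert y E}

/-- Intersection of all clauses of `F` (for nonempty `F`). -/
def bigInter (F : Cls) : Finset ℤ := (F.sup id).filter (fun x => ∀ C ∈ F, x ∈ C)

/-- Clause-factor: a nonempty `F' ⊆ F` whose residue is unsatisfiable. -/
def ClauseFactor (F F' : Cls) : Prop :=
  F'.Nonempty ∧ F' ⊆ F ∧ ¬ Sat (F'.image (fun E => E \ bigInter F'))

/-- A clause-factor is trivial if it has one clause, or is unsatisfiable and all of `F`. -/
def TrivialFactor (F F' : Cls) : Prop := F'.card = 1 ∨ (¬ Sat F' ∧ F' = F)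

/-- Clause-irreducible: every clause-factor is trivial. -/
def ClauseIrreducible (F : Cls) : Prop := ∀ F', ClauseFactor F F' → TrivialFactor F F'

/-- DP-reduction (variable elimination) on variable `v`. -/
def dp (v : ℤ) (F : Cls) : Cls :=
  ((F ×ˢ F).filter (fun p => p.1 ∩ p.2.image (fun x => -x) = {v})).image
    (fun p => (p.1 ∪ p.2) \ {v, -v}) ∪
  F.filter (fun C => v ∉ C ∧ -v ∉ C)

/-- `x` (or `-x`) occurs in a clause of `F`. -/
def LitIn (F : Cls) (x : ℤ) : Prop := ∃ C ∈ F, x ∈ C ∨ -x ∈ C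

/-- Isomorphism of clause-sets. -/
def Iso (F G : Cls) : Prop :=
  ∃ f : ℤ → ℤ, (∀ x, f (-x) = - f x) ∧
    (∀ x y, LitIn F x → LitIn F y → f x = f y → x = y) ∧
    G = F.image (fun C => C.image f)

/-- The clause-set D3. -/
def D3 : Cls := {({1,2,3} : Finset ℤ), {-1,-2,-3}, {-1,2}, {-2,3}, {-3,1}}

/-- Logical equivalence of clause-sets. -/
def LogEquiv (F G : Cls) : Prop :=
  ∀ S : Finset ℤ, IsClause S →
    ((∀ D ∈ F, (S ∩ D).Nonempty) ↔ (∀ D ∈ G, (S ∩ D).Nonempty))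

def TotalOn (F : Cls) (α : Finset ℤ) : Prop := ∀ C ∈ F, ∀ x ∈ C, x ∈ α ∨ -x ∈ α

def Fals (α D : Finset ℤ) : Prop := ∀ x ∈ D, -x ∈ α

lemma clause_mono {C E : Finset ℤ} (hC : IsClause C) (h : E ⊆ C) : IsClause E :=
  ⟨fun h0 => hC.1 (h h0), fun x hx hnx => hC.2 x (h hx) (h hnx)⟩

lemma mem_cvar {F : Cls} {w : ℤ} : w ∈ cvar F ↔ ∃ C ∈ F, ∃ x ∈ C, |x| = w := by
  simp [cvar, Finset.mem_sup, Finset.mem_image]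

lemma cvar_pos {F : Cls} (hF : IsClauseSet F) {w : ℤ} (hw : w ∈ cvar F) : 0 < w := by
  obtain ⟨C, hC, x, hx, rfl⟩ := mem_cvar.1 hw
  have : x ≠ 0 := fun h => (hF C hC).1 (h ▸ hx)
  exact abs_pos.2 this

lemma exists_total (F : Cls) (hF : IsClauseSet F) (P : Finset ℤ) (hP : IsClause P) :
    ∃ α, IsClause α ∧ P ⊆ α ∧ TotalOn F α := by
  refine ⟨P ∪ (cvar F).filter (fun w => w ∉ P ∧ -w ∉ P), ?_, Finset.subset_union_left, ?_⟩
  · constructor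
    · intro h0
      rcases Finset.mem_union.1 h0 with h | h
      · exact hP.1 h
      · have := cvar_pos hF (Finset.mem_filter.1 h).1; omega
    · intro a ha hna
      rcases Finset.mem_union.1 ha with ha | ha <;> rcases Finset.mem_union.1 hna with hna | hna
      · exact hP.2 a ha hna
      · exact (Finset.mem_filter.1 hna).2.2 (by rwa [neg_neg])
      · exact (Finset.mem_filter.1 ha).2.2 hna
      · have h1 := cvar_pos hF (Finset.mem_filter.1 ha).1
        have h2 := cvar_pos hF (Finset.mem_filter.1 hna).1
        omega
  · intro C hC x hx
    have hw : |x| ∈ cvar F := mem_cvar.2 ⟨C, hC, x, hx, rfl⟩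
    by_cases h1 : |x| ∈ P
    · rcases abs_cases x with ⟨he, _⟩ | ⟨he, _⟩
      · left; exact Finset.mem_union_left _ (he ▸ h1)
      · right; have : -x ∈ P := by rw [← he]; exact h1
        exact Finset.mem_union_left _ this
    · by_cases h2 : -|x| ∈ P
      · rcases abs_cases x with ⟨he, _⟩ | ⟨he, _⟩
        · right; have : -x ∈ P := by rw [he] at h2; exact h2
          exact Finset.mem_union_left _ this
        · left; have : x ∈ P := by rw [he, neg_neg] at h2; exact h2
          exact Finset.mem_union_left _ this
      · have hmem : |x| ∈ P ∪ (cvar F).filter (fun w => w ∉ P ∧ -w ∉ P) :=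
          Finset.mem_union_right _ (Finset.mem_filter.2 ⟨hw, h1, h2⟩)
        rcases abs_cases x with ⟨he, _⟩ | ⟨he, _⟩
        · left; exact he ▸ hmem
        · right; have : -x = |x| := by omega
          exact this ▸ hmem

lemma exists_fals {F : Cls} (hU : UHit F) {α : Finset ℤ} (hα : IsClause α)
    (htot : TotalOn F α) : ∃ D ∈ F, Fals α D := by
  have hns := hU.2.2
  rw [Sat] at hns
  push_neg at hns
  obtain ⟨D, hD, hempty⟩ := hns α hα
  refine ⟨D, hD, fun x hx => ?_⟩
  rcases htot D hD x hx with h | h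
  · exact absurd (Finset.mem_inter.2 ⟨h, hx⟩) (by rw [hempty]; exact Finset.notMem_empty _)
  · exact h

lemma fals_unique {F : Cls} (hU : UHit F) {α : Finset ℤ} (hα : IsClause α)
    {D D' : Finset ℤ} (hD : D ∈ F) (hD' : D' ∈ F) (h1 : Fals α D) (h2 : Fals α D') :
    D = D' := by
  by_contra hne
  obtain ⟨x, hx, hnx⟩ := hU.2.1 D hD D' hD' hne
  have hxα : -x ∈ α := h1 x hx
  have : -(-x) ∈ α := h2 (-x) hnx
  rw [neg_neg] at this
  exact hα.2 x this hxα

lemma force {F : Cls} (hU : UHit F) {Q D : Finset ℤ} (hQ : IsClause Q) (hD : D ∈ F)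
    (h : ∀ α, IsClause α → Q ⊆ α → TotalOn F α → Fals α D) : ∀ x ∈ D, -x ∈ Q := by
  intro x hx
  have hx0 : x ≠ 0 := fun h0 => (hU.1 D hD).1 (h0 ▸ hx)
  by_contra hnx
  by_cases hxQ : x ∈ Q
  · obtain ⟨α, hα, hsub, htot⟩ := exists_total F hU.1 Q hQ
    exact hα.2 x (hsub hxQ) (h α hα hsub htot x hx)
  · have hQ' : IsClause (insert x Q) := by
      constructor
      · intro h0; rcases Finset.mem_insert.1 h0 with h0 | h0
        · exact hx0 h0.symm
        · exact hQ.1 h0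
      · intro a ha hna
        rw [Finset.mem_insert] at ha hna
        rcases ha with rfl | ha <;> rcases hna with h | h
        · omega
        · exact hnx h
        · exact hnx (by rw [show -x = a from by omega]; exact ha)
        · exact hQ.2 a ha h
    obtain ⟨α, hα, hsub, htot⟩ := exists_total F hU.1 (insert x Q) hQ'
    have hxα : x ∈ α := hsub (Finset.mem_insert_self x Q)
    have : -x ∈ α := h α hα (fun a ha => hsub (Finset.mem_insert_of_mem ha)) htot x hx
    exact hα.2 x hxα this
lemma insert_clause {x : ℤ} {Q : Finset ℤ} (hQ : IsClause Q) (hx0 : x ≠ 0)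
    (h1 : x ∉ Q) (h2 : -x ∉ Q) : IsClause (insert x Q) := by
  constructor
  · intro h0; rcases Finset.mem_insert.1 h0 with h0 | h0
    · exact hx0 h0.symm
    · exact hQ.1 h0
  · intro a ha hna
    rw [Finset.mem_insert] at ha hna
    rcases ha with rfl | ha <;> rcases hna with h | h
    · omega
    · exact h2 h
    · exact h2 (by rw [show -x = a from by omega]; exact ha)
    · exact hQ.2 a ha h

def flp (u : ℤ) (α : Finset ℤ) : Finset ℤ := insert (-u) (α.erase u)

lemma mem_flip {u a : ℤ} {α : Finset ℤ} : a ∈ flp u α ↔ a = -u ∨ (a ∈ α ∧ a ≠ u) := by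
  simp only [flp, Finset.mem_insert, Finset.mem_erase]; tauto

lemma flip_clause {u : ℤ} (hu : u ≠ 0) {α : Finset ℤ} (hα : IsClause α) :
    IsClause (flp u α) := by
  constructor
  · intro h0; rcases mem_flip.1 h0 with h | h
    · omega
    · exact hα.1 h.1
  · intro a ha hna
    rcases mem_flip.1 ha with h | h <;> rcases mem_flip.1 hna with h' | h'
    · omega
    · exact h'.2 (by omega)
    · exact h.2 (by omega)
    · exact hα.2 a h.1 h'.1

lemma flip_total {F : Cls} {u : ℤ} {α : Finset ℤ} (htot : TotalOn F α) :
    TotalOn F (flp u α) := by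
  intro C hC x hx
  rcases htot C hC x hx with h | h
  · by_cases hxu : x = u
    · right; exact mem_flip.2 (Or.inl (by omega))
    · left; exact mem_flip.2 (Or.inr ⟨h, hxu⟩)
  · by_cases hxu : -x = u
    · left; exact mem_flip.2 (Or.inl (by omega))
    · right; exact mem_flip.2 (Or.inr ⟨h, hxu⟩)

lemma not_mem_flip {u : ℤ} (hu : u ≠ 0) (α : Finset ℤ) : u ∉ flp u α := by
  intro h; rcases mem_flip.1 h with h | h
  · omega
  · exact h.2 rfl

lemma neg_mem_flip (u : ℤ) (α : Finset ℤ) : -u ∈ flp u α := mem_flip.2 (Or.inl rfl)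

lemma fals_to_flip {u : ℤ} {α D : Finset ℤ} (h : -u ∉ D) (hf : Fals α D) :
    Fals (flp u α) D := by
  intro x hx
  exact mem_flip.2 (Or.inr ⟨hf x hx, fun he => h (by rw [show -u = x from by omega]; exact hx)⟩)

lemma fals_from_flip {u : ℤ} {α D : Finset ℤ} (h : u ∉ D) (hf : Fals (flp u α) D) :
    Fals α D := by
  intro x hx
  rcases mem_flip.1 (hf x hx) with he | he
  · exact absurd (by rw [show u = x from by omega]; exact hx) h
  · exact he.1

lemma lemB {F : Cls} (hU : UHit F) {u : ℤ} {E : Finset ℤ}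
    (h1 : ldeg F u = 1) (hCF : insert u E ∈ F)
    {α D : Finset ℤ} (hα : IsClause α) (htot : TotalOn F α)
    (huα : u ∈ α) (hEα : ∀ e ∈ E, -e ∈ α)
    (hD : D ∈ F) (hfals : Fals α D) : -u ∈ D := by
  have hCcl : IsClause (insert u E) := hU.1 _ hCF
  have hu0 : u ≠ 0 := fun h => hCcl.1 (h ▸ Finset.mem_insert_self u E)
  have hnuE : -u ∉ E := fun h =>
    hCcl.2 u (Finset.mem_insert_self u E) (Finset.mem_insert_of_mem h)
  by_contra hnuD
  by_cases huD : u ∈ D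
  · have hDC : D = insert u E := by
      have hcard : (F.filter (fun C => u ∈ C)).card ≤ 1 := h1.le
      exact Finset.card_le_one.1 hcard D (Finset.mem_filter.2 ⟨hD, huD⟩)
        (insert u E) (Finset.mem_filter.2 ⟨hCF, Finset.mem_insert_self u E⟩)
    exact hα.2 u huα (hfals u (hDC ▸ huD))
  · have hα' : IsClause (flp u α) := flip_clause hu0 hα
    have hfD' : Fals (flp u α) D := fals_to_flip hnuD hfals
    have hfC' : Fals (flp u α) (insert u E) := by
      intro x hx
      rcases Finset.mem_insert.1 hx with rfl | hx
      · exact neg_mem_flip _ _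
      · refine mem_flip.2 (Or.inr ⟨hEα x hx, fun he => hnuE ?_⟩)
        rw [show -u = x from by omega]; exact hx
    have := fals_unique hU hα' hCF hD hfC' hfD'
    exact huD (this ▸ Finset.mem_insert_self u E)

lemma pure_lit {F : Cls} (hU : UHit F) {u : ℤ} {C : Finset ℤ} (hC : C ∈ F) (huC : u ∈ C)
    (hno : ∀ D ∈ F, -u ∉ D) : False := by
  have hCcl : IsClause C := hU.1 C hC
  have hu0 : u ≠ 0 := fun h => hCcl.1 (h ▸ huC)
  have hnC : IsClause (C.image (fun x => -x)) := by
    constructor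
    · intro h0
      obtain ⟨x, hx, hx0⟩ := Finset.mem_image.1 h0
      exact hCcl.1 (by rwa [show x = (0:ℤ) from by omega] at hx)
    · intro a ha hna
      obtain ⟨x, hx, hxa⟩ := Finset.mem_image.1 ha
      obtain ⟨y, hy, hya⟩ := Finset.mem_image.1 hna
      exact hCcl.2 x hx (by rw [show -x = y from by omega]; exact hy)
  obtain ⟨α, hα, hsub, htot⟩ := exists_total F hU.1 _ hnC
  have hfC : Fals α C := fun x hx => hsub (Finset.mem_image_of_mem _ hx)
  have hα' : IsClause (flp (-u) α) := flip_clause (by omega) hα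
  obtain ⟨D, hDF, hfD⟩ := exists_fals hU hα' (flip_total htot)
  by_cases huD : u ∈ D
  · have : -u ∈ flp (-u) α := hfD u huD
    rcases mem_flip.1 this with h | h
    · omega
    · exact h.2 rfl
  · have hfD2 : Fals α D := by
      refine fals_from_flip ?_ hfD
      intro h; exact hno D hDF h
    have hDC : C = D := fals_unique hU hα hC hDF hfC hfD2
    exact huD (hDC ▸ huC)
lemma Q_clause {u : ℤ} {E : Finset ℤ} (hu : u ∉ E) (hC : IsClause (insert u E)) :
    IsClause (insert u (E.image (fun x => -x))) := by
  have hu0 : u ≠ 0 := fun h => hC.1 (h ▸ Finset.mem_insert_self u E)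
  constructor
  · intro h0
    rcases Finset.mem_insert.1 h0 with h | h
    · exact hu0 h.symm
    · obtain ⟨e, he, hee⟩ := Finset.mem_image.1 h
      exact hC.1 (Finset.mem_insert_of_mem (by rwa [show e = (0:ℤ) from by omega] at he))
  · intro a ha hna
    rcases Finset.mem_insert.1 ha with rfl | ha <;> rcases Finset.mem_insert.1 hna with h | h
    · omega
    · obtain ⟨e, he, hee⟩ := Finset.mem_image.1 h
      exact hu (by rwa [show e = a from by omega] at he)
    · obtain ⟨e, he, hee⟩ := Finset.mem_image.1 ha
      exact hu (by rwa [show e = u from by omega] at he)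
    · obtain ⟨e1, he1, h1⟩ := Finset.mem_image.1 ha
      obtain ⟨e2, he2, h2⟩ := Finset.mem_image.1 h
      exact hC.2 e1 (Finset.mem_insert_of_mem he1)
        (by rw [show -e1 = e2 from by omega]; exact Finset.mem_insert_of_mem he2)

lemma main_fs {F : Cls} (hU : UHit F) {u : ℤ} {C : Finset ℤ} (hC : C ∈ F) (huC : u ∈ C)
    (h1 : ldeg F u = 1) (h2 : ldeg F (-u) ≤ 2) : ∃ P ⊆ F, IsFsPair P := by
  classical
  have hCcl : IsClause C := hU.1 C hC
  have hu0 : u ≠ 0 := fun h => hCcl.1 (h ▸ huC)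
  set E := C.erase u with hEdef
  have hCE : insert u E = C := Finset.insert_erase huC
  have huE : u ∉ E := Finset.notMem_erase u C
  have hEsubC : E ⊆ C := Finset.erase_subset u C
  have hnuE : -u ∉ E := fun h => hCcl.2 u huC (hEsubC h)
  have hCF : insert u E ∈ F := hCE ▸ hC
  have hCcl' : IsClause (insert u E) := hCE ▸ hCcl
  have hE0 : ∀ e ∈ E, e ≠ 0 := fun e he h => hCcl.1 (h ▸ hEsubC he)
  have hCuniq : ∀ D ∈ F, u ∈ D → D = insert u E := by
    intro D hD huD
    exact Finset.card_le_one.1 h1.le D (Finset.mem_filter.2 ⟨hD, huD⟩) _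
      (Finset.mem_filter.2 ⟨hCF, Finset.mem_insert_self u E⟩)
  set Q : Finset ℤ := insert u (E.image (fun x => -x)) with hQdef
  have hQcl : IsClause Q := Q_clause huE hCcl'
  have hmemQ : ∀ a, a ∈ Q ↔ a = u ∨ ∃ e ∈ E, -e = a := by
    intro a; simp [hQdef, Finset.mem_insert, Finset.mem_image]
  have huQ : u ∈ Q := Finset.mem_insert_self _ _
  have hEQ : ∀ e ∈ E, -e ∈ Q := fun e he => (hmemQ _).2 (Or.inr ⟨e, he, rfl⟩)
  -- the key contradiction machine
  have key : ∀ e0 ∈ E, ∀ (Db : Finset ℤ) (z : ℤ), Db ∈ F → -u ∈ Db → e0 ∉ Db →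
      z ∉ E → -z ∉ E → z ≠ u → z ≠ -u → z ≠ 0 →
      (∀ x ∈ Db, x = -z ∨ x = -u ∨ x ∈ E) → False := by
    intro e0 he0E Db z hDbF hDbu he0Db hzE hnzE hzu hznu hz0 hmem
    have he00 : e0 ≠ 0 := hE0 e0 he0E
    have hQ''cl0 : IsClause (insert u ((E.erase e0).image (fun x => -x))) :=
      Q_clause (fun h => huE (Finset.erase_subset _ _ h))
        (clause_mono hCcl' (Finset.insert_subset_insert _ (Finset.erase_subset _ _)))
    have hQ''cl : IsClause (insert e0 (insert u ((E.erase e0).image (fun x => -x)))) := by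
      apply insert_clause hQ''cl0 he00
      · intro h
        rcases Finset.mem_insert.1 h with h | h
        · exact huE (h ▸ he0E)
        · obtain ⟨e, he, hee⟩ := Finset.mem_image.1 h
          exact hCcl.2 e (hEsubC (Finset.mem_of_mem_erase he))
            (by rw [show -e = e0 from by omega]; exact hEsubC he0E)
      · intro h
        rcases Finset.mem_insert.1 h with h | h
        · exact hnuE (by rw [show -u = e0 from by omega]; exact he0E)
        · obtain ⟨e, he, hee⟩ := Finset.mem_image.1 h
          exact Finset.notMem_erase e0 E (by rwa [show e = e0 from by omega] at he)
    have hQ4cl : IsClause (insert z (insert e0 (insert u ((E.erase e0).image (fun x => -x))))) := by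
      apply insert_clause hQ''cl hz0
      · intro h
        rcases Finset.mem_insert.1 h with h | h
        · exact hzE (h ▸ he0E)
        · rcases Finset.mem_insert.1 h with h | h
          · exact hzu h
          · obtain ⟨e, he, hee⟩ := Finset.mem_image.1 h
            exact hnzE (Finset.mem_of_mem_erase (by rwa [show e = -z from by omega] at he))
      · intro h
        rcases Finset.mem_insert.1 h with h | h
        · exact hnzE (h ▸ he0E)
        · rcases Finset.mem_insert.1 h with h | h
          · exact hznu (by omega)
          · obtain ⟨e, he, hee⟩ := Finset.mem_image.1 h
            exact hzE (Finset.mem_of_mem_erase (by rwa [show e = z from by omega] at he))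
    obtain ⟨α, hα, hsubα, htotα⟩ := exists_total F hU.1 _ hQ4cl
    have hzα : z ∈ α := hsubα (Finset.mem_insert_self _ _)
    have he0α : e0 ∈ α := hsubα (Finset.mem_insert_of_mem (Finset.mem_insert_self _ _))
    have huα : u ∈ α := hsubα (Finset.mem_insert_of_mem (Finset.mem_insert_of_mem
      (Finset.mem_insert_self _ _)))
    have hEα : ∀ e ∈ E, e ≠ e0 → -e ∈ α := fun e he hne =>
      hsubα (Finset.mem_insert_of_mem (Finset.mem_insert_of_mem (Finset.mem_insert_of_mem
        (Finset.mem_image_of_mem _ (Finset.mem_erase.2 ⟨hne, he⟩)))))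
    have hfb : Fals α Db := by
      intro x hx
      rcases hmem x hx with rfl | rfl | hxE
      · rwa [neg_neg]
      · rwa [neg_neg]
      · exact hEα x hxE (fun h => he0Db (h ▸ hx))
    have hα' := flip_clause hu0 hα
    obtain ⟨D', hD'F, hfD'⟩ := exists_fals hU hα' (flip_total htotα)
    by_cases huD' : u ∈ D'
    · have hD'C : D' = insert u E := hCuniq D' hD'F huD'
      have hm : -e0 ∈ flp u α := hfD' e0 (hD'C ▸ Finset.mem_insert_of_mem he0E)
      exact hα'.2 e0 (mem_flip.2 (Or.inr ⟨he0α, fun h => huE (h ▸ he0E)⟩)) hm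
    · by_cases hnuD' : -u ∈ D'
      · have hm : -(-u) ∈ flp u α := hfD' (-u) hnuD'
        rw [neg_neg] at hm
        exact not_mem_flip hu0 α hm
      · have hDb : D' = Db := fals_unique hU hα hD'F hDbF (fals_from_flip huD' hfD') hfb
        exact hnuD' (hDb ▸ hDbu)
  -- a fresh dummy literal
  obtain ⟨z0, hz00, hz0E, hnz0E, hz0u, hz0nu⟩ :
      ∃ z : ℤ, z ≠ 0 ∧ z ∉ E ∧ -z ∉ E ∧ z ≠ u ∧ z ≠ -u := by
    set M := ((insert u E).sup' (Finset.insert_nonempty u E) (fun x => |x|)) + 1 with hM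
    have hgt : ∀ a ∈ insert u E, |a| < M := fun a ha => by
      have := Finset.le_sup' (fun x => |x|) ha
      omega
    have hMu := hgt u (Finset.mem_insert_self u E)
    have hau : u ≤ |u| := le_abs_self u
    have hau2 : -|u| ≤ u := neg_abs_le u
    have h0u : (0:ℤ) ≤ |u| := abs_nonneg u
    refine ⟨M, by omega, fun h => ?_, fun h => ?_, by omega, by omega⟩
    · have h1 := hgt M (Finset.mem_insert_of_mem h)
      have := le_abs_self M
      omega
    · have h1 := hgt (-M) (Finset.mem_insert_of_mem h)
      have := neg_abs_le (-M)
      omega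
  -- first total assignment
  obtain ⟨α0, hα0, hsub0, htot0⟩ := exists_total F hU.1 Q hQcl
  obtain ⟨D2, hD2F, hf2⟩ := exists_fals hU hα0 htot0
  have hD2u : -u ∈ D2 := lemB hU h1 hCF hα0 htot0 (hsub0 huQ)
    (fun e he => hsub0 (hEQ e he)) hD2F hf2
  have hD2cl : IsClause D2 := hU.1 _ hD2F
  have hD2Q : ∀ x ∈ D2, x ∉ Q := fun x hx hxQ => hα0.2 x (hsub0 hxQ) (hf2 x hx)
  by_cases hsub : ∀ x ∈ D2, -x ∈ Q
  · have hD2sub : ∀ x ∈ D2, x = -u ∨ x ∈ E := by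
      intro x hx
      rcases (hmemQ _).1 (hsub x hx) with h | ⟨e, he, hee⟩
      · left; omega
      · right; rwa [show x = e from by omega]
    have hfull : ∀ e ∈ E, e ∈ D2 := by
      intro e he
      by_contra hcon
      exact key e he D2 z0 hD2F hD2u hcon hz0E hnz0E hz0u hz0nu hz00
        (fun x hx => Or.inr (hD2sub x hx))
    have hD2eq : D2 = insert (-u) E := by
      apply Finset.ext; intro x
      constructor
      · intro hx
        rcases hD2sub x hx with rfl | h
        · exact Finset.mem_insert_self _ _
        · exact Finset.mem_insert_of_mem h
      · intro hx
        rcases Finset.mem_insert.1 hx with rfl | h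
        · exact hD2u
        · exact hfull x h
    refine ⟨{insert u E, insert (-u) E}, ?_, E, u,
      clause_mono hCcl' (Finset.subset_insert _ _), hu0, huE, hnuE, rfl⟩
    intro Z hZ
    rcases Finset.mem_insert.1 hZ with rfl | hZ
    · exact hCF
    · rw [Finset.mem_singleton.1 hZ, ← hD2eq]; exact hD2F
  · push_neg at hsub
    obtain ⟨x2, hx2D2, hnx2Q⟩ := hsub
    have hx2Q : x2 ∉ Q := hD2Q x2 hx2D2
    have hx20 : x2 ≠ 0 := fun h => hD2cl.1 (h ▸ hx2D2)
    have hQ1cl : IsClause (insert x2 Q) := insert_clause hQcl hx20 hx2Q hnx2Q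
    obtain ⟨α1, hα1, hsub1, htot1⟩ := exists_total F hU.1 _ hQ1cl
    have hQα1 : Q ⊆ α1 := fun a ha => hsub1 (Finset.mem_insert_of_mem ha)
    obtain ⟨D1, hD1F, hf1⟩ := exists_fals hU hα1 htot1
    have hD1u : -u ∈ D1 := lemB hU h1 hCF hα1 htot1 (hQα1 huQ)
      (fun e he => hQα1 (hEQ e he)) hD1F hf1
    have hD1cl : IsClause D1 := hU.1 _ hD1F
    have hne12 : D1 ≠ D2 := by
      intro h
      exact hα1.2 x2 (hsub1 (Finset.mem_insert_self _ _)) (hf1 x2 (h ▸ hx2D2))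
    have hD1Q : ∀ x ∈ D1, x ∉ Q := fun x hx hxQ => hα1.2 x (hQα1 hxQ) (hf1 x hx)
    have hSeq : ∀ D ∈ F, -u ∈ D → D = D1 ∨ D = D2 := by
      intro D hD hDu
      by_contra hcon
      push_neg at hcon
      have hsub3 : ({D, D1, D2} : Cls) ⊆ F.filter (fun C => -u ∈ C) := by
        intro Z hZ
        simp only [Finset.mem_insert, Finset.mem_singleton] at hZ
        rcases hZ with rfl | rfl | rfl
        · exact Finset.mem_filter.2 ⟨hD, hDu⟩
        · exact Finset.mem_filter.2 ⟨hD1F, hD1u⟩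
        · exact Finset.mem_filter.2 ⟨hD2F, hD2u⟩
      have hc3 : ({D, D1, D2} : Cls).card = 3 := by
        rw [Finset.card_insert_of_notMem, Finset.card_insert_of_notMem,
          Finset.card_singleton]
        · simp [hne12]
        · simp [hcon.1, hcon.2]
      have hle := Finset.card_le_card hsub3
      rw [hc3] at hle
      have : (3:ℕ) ≤ 2 := hle.trans h2
      omega
    obtain ⟨y, hyD1, hnyD2⟩ := hU.2.1 D1 hD1F D2 hD2F hne12
    have hy0 : y ≠ 0 := fun h => hD1cl.1 (h ▸ hyD1)
    have hyQ : y ∉ Q := hD1Q y hyD1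
    have hynu : y ≠ -u := by
      intro h
      have hnn : -(-u) ∉ D2 := hD2cl.2 (-u) hD2u
      rw [neg_neg] at hnn
      exact hnn (by rw [show u = -y from by omega]; exact hnyD2)
    have hyu : y ≠ u := fun h => hyQ (h ▸ huQ)
    have hyE : y ∉ E := fun h => hD2Q (-y) hnyD2 (hEQ y h)
    have hnyE : -y ∉ E := fun h => hyQ ((hmemQ y).2 (Or.inr ⟨-y, h, by omega⟩))
    have hnyQ : -y ∉ Q := by
      intro h
      rcases (hmemQ _).1 h with h | ⟨e, he, hee⟩
      · exact hynu (by omega)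
      · exact hyE (by rwa [show e = y from by omega] at he)
    have hforce2 : ∀ x ∈ D2, -x ∈ insert y Q := by
      apply force hU (insert_clause hQcl hy0 hyQ hnyQ) hD2F
      intro α hα hsubα htotα
      have hQα : Q ⊆ α := fun a ha => hsubα (Finset.mem_insert_of_mem ha)
      obtain ⟨D, hDF, hfD⟩ := exists_fals hU hα htotα
      have hDu : -u ∈ D := lemB hU h1 hCF hα htotα (hQα huQ)
        (fun e he => hQα (hEQ e he)) hDF hfD
      rcases hSeq D hDF hDu with rfl | rfl
      · exact absurd (hfD y hyD1) (hα.2 y (hsubα (Finset.mem_insert_self _ _)))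
      · exact hfD
    have hforce1 : ∀ x ∈ D1, -x ∈ insert (-y) Q := by
      apply force hU (insert_clause hQcl (by omega) hnyQ (by rwa [neg_neg])) hD1F
      intro α hα hsubα htotα
      have hQα : Q ⊆ α := fun a ha => hsubα (Finset.mem_insert_of_mem ha)
      obtain ⟨D, hDF, hfD⟩ := exists_fals hU hα htotα
      have hDu : -u ∈ D := lemB hU h1 hCF hα htotα (hQα huQ)
        (fun e he => hQα (hEQ e he)) hDF hfD
      rcases hSeq D hDF hDu with rfl | rfl
      · exact hfD
      · have h1' : -(-y) ∈ α := hfD (-y) hnyD2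
        rw [neg_neg] at h1'
        exact absurd (hsubα (Finset.mem_insert_self _ _)) (hα.2 y h1')
    have hD2mem : ∀ x ∈ D2, x = -y ∨ x = -u ∨ x ∈ E := by
      intro x hx
      rcases Finset.mem_insert.1 (hforce2 x hx) with h | h
      · left; omega
      · rcases (hmemQ _).1 h with h | ⟨e, he, hee⟩
        · right; left; omega
        · right; right; rwa [show x = e from by omega]
    have hD1mem : ∀ x ∈ D1, x = y ∨ x = -u ∨ x ∈ E := by
      intro x hx
      rcases Finset.mem_insert.1 (hforce1 x hx) with h | h
      · left; omega
      · rcases (hmemQ _).1 h with h | ⟨e, he, hee⟩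
        · right; left; omega
        · right; right; rwa [show x = e from by omega]
    have hED2 : ∀ e ∈ E, e ∈ D2 := by
      intro e he
      by_contra hcon
      exact key e he D2 y hD2F hD2u hcon hyE hnyE hyu hynu hy0 hD2mem
    have hED1 : ∀ e ∈ E, e ∈ D1 := by
      intro e he
      by_contra hcon
      refine key e he D1 (-y) hD1F hD1u hcon hnyE (by rwa [neg_neg]) (by omega) (by omega)
        (by omega) ?_
      intro x hx
      rcases hD1mem x hx with h | h | h
      · left; omega
      · right; left; exact h
      · right; right; exact h
    have hD1eq : D1 = insert y (insert (-u) E) := by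
      apply Finset.ext; intro x
      constructor
      · intro hx
        rcases hD1mem x hx with rfl | rfl | h
        · exact Finset.mem_insert_self _ _
        · exact Finset.mem_insert_of_mem (Finset.mem_insert_self _ _)
        · exact Finset.mem_insert_of_mem (Finset.mem_insert_of_mem h)
      · intro hx
        rcases Finset.mem_insert.1 hx with rfl | hx
        · exact hyD1
        · rcases Finset.mem_insert.1 hx with rfl | hx
          · exact hD1u
          · exact hED1 x hx
    have hD2eq : D2 = insert (-y) (insert (-u) E) := by
      apply Finset.ext; intro x
      constructor
      · intro hx
        rcases hD2mem x hx with rfl | rfl | h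
        · exact Finset.mem_insert_self _ _
        · exact Finset.mem_insert_of_mem (Finset.mem_insert_self _ _)
        · exact Finset.mem_insert_of_mem (Finset.mem_insert_of_mem h)
      · intro hx
        rcases Finset.mem_insert.1 hx with rfl | hx
        · exact hnyD2
        · rcases Finset.mem_insert.1 hx with rfl | hx
          · exact hD2u
          · exact hED2 x hx
    refine ⟨{D1, D2}, ?_, insert (-u) E, y, ?_, hy0, ?_, ?_, ?_⟩
    · intro Z hZ
      rcases Finset.mem_insert.1 hZ with rfl | hZ
      · exact hD1F
      · rw [Finset.mem_singleton.1 hZ]; exact hD2F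
    · apply clause_mono hD1cl
      rw [hD1eq]; exact Finset.subset_insert _ _
    · intro h
      rcases Finset.mem_insert.1 h with h | h
      · exact hynu h
      · exact hyE h
    · intro h
      rcases Finset.mem_insert.1 h with h | h
      · exact hyu (by omega)
      · exact hnyE h
    · rw [hD1eq, hD2eq]
/-- A variable of a UHIT occurring at most three times is singular,
and the UHIT contains an fs-pair. -/
theorem stmt12 (F : Cls) (hU : UHit F) (v : ℤ) (hv : v ∈ cvar F) (h : vdeg F v ≤ 3) :
    SingularVar F v ∧ ∃ P ⊆ F, IsFsPair P := by
  obtain ⟨C0, hC0, x0, hx0, hvx⟩ := mem_cvar.1 hv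
  have hocc : v ∈ C0 ∨ -v ∈ C0 := by
    rcases abs_cases x0 with ⟨he, _⟩ | ⟨he, _⟩
    · left; rwa [show v = x0 from by omega]
    · right; rwa [show -v = x0 from by omega]
  rw [vdeg] at h
  have hboth : 1 ≤ ldeg F v ∧ 1 ≤ ldeg F (-v) := by
    rcases hocc with hvC | hvC
    · refine ⟨Finset.card_pos.2 ⟨C0, Finset.mem_filter.2 ⟨hC0, hvC⟩⟩, ?_⟩
      by_contra hcon
      push_neg at hcon
      simp only [ldeg, Nat.lt_one_iff, Finset.card_eq_zero] at hcon
      refine absurd (pure_lit hU hC0 hvC ?_) not_false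
      intro D hD hm
      have hmem : D ∈ Finset.filter (fun C => -v ∈ C) F := Finset.mem_filter.2 ⟨hD, hm⟩
      rw [hcon] at hmem
      exact Finset.notMem_empty D hmem
    · refine ⟨?_, Finset.card_pos.2 ⟨C0, Finset.mem_filter.2 ⟨hC0, hvC⟩⟩⟩
      by_contra hcon
      push_neg at hcon
      simp only [ldeg, Nat.lt_one_iff, Finset.card_eq_zero] at hcon
      refine absurd (pure_lit hU hC0 hvC ?_) not_false
      intro D hD hm
      rw [neg_neg] at hm
      have hmem : D ∈ Finset.filter (fun C => v ∈ C) F := Finset.mem_filter.2 ⟨hD, hm⟩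
      rw [hcon] at hmem
      exact Finset.notMem_empty D hmem
  refine ⟨⟨hv, by omega⟩, ?_⟩
  have hcase : ldeg F v = 1 ∨ ldeg F (-v) = 1 := by omega
  rcases hcase with h1 | h1
  · obtain ⟨C, hCf⟩ := Finset.card_pos.1 (show 0 < (F.filter (fun C => v ∈ C)).card by
      rw [show (F.filter (fun C => v ∈ C)).card = ldeg F v from rfl]; omega)
    obtain ⟨hCF, hvC⟩ := Finset.mem_filter.1 hCf
    exact main_fs hU hCF hvC h1 (by omega)
  · obtain ⟨C, hCf⟩ := Finset.card_pos.1 (show 0 < (F.filter (fun C => -v ∈ C)).card by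
      rw [show (F.filter (fun C => -v ∈ C)).card = ldeg F (-v) from rfl]; omega)
    obtain ⟨hCF, hvC⟩ := Finset.mem_filter.1 hCf
    refine main_fs hU hCF hvC h1 ?_
    rw [neg_neg]; omega
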